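/- Pliss Lemma: Let A ≥ c₂ > c₁ > 0 and set ξ = (c₂ - c₁)/(A - c₁). If (a_i)_{1 ≤ i ≤ N} is a sequence of real numbers with a_i ≤ A for every i and (1/N)·∑_{j=1}^N a_j ≥ c₂, then there exist ℓ ≥ ξ·N and indices 1 ≤ n₁ < n₂ < ⋯ < n_ℓ ≤ N such that for each 1 ≤ i ≤ ℓ and every 0 ≤ n < n_i one has ∑_{j=n+1}^{n_i} a_j ≥ c₁·(n_i − n). -/

import Mathlib

open Finset

/-- **Pliss Lemma.** -/
theorem pliss_lemma (A c₁ c₂ : ℝ) (hc₁ : 0 < c₁) (hc₁₂ : c₁ < c₂) (hc₂A : c₂ ≤ A)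
    (N : ℕ) (a : ℕ → ℝ)
    (ha : ∀ i, 1 ≤ i → i ≤ N → a i ≤ A)
    (hsum : c₂ * N ≤ ∑ j ∈ Finset.Icc 1 N, a j) :
    ∃ ns : Finset ℕ, ns ⊆ Finset.Icc 1 N ∧
      ((c₂ - c₁) / (A - c₁)) * N ≤ (ns.card : ℝ) ∧
      ∀ ni ∈ ns, ∀ n < ni, c₁ * ((ni : ℝ) - (n : ℝ)) ≤ ∑ j ∈ Finset.Icc (n + 1) ni, a j := by
  classical
  have hA : c₁ < A := lt_of_lt_of_le hc₁₂ hc₂A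
  have hA0 : (0 : ℝ) < A - c₁ := by linarith
  set b : ℕ → ℝ := fun j => a j - c₁ with hb
  set S : ℕ → ℝ := fun n => ∑ j ∈ Icc 1 n, b j with hSdef
  set P : ℕ → Prop := fun n => ∀ m < n, S m ≤ S n with hPdef
  set ns := (Icc 1 N).filter P with hns
  -- key counting lemma
  have key : ∀ n, n ≤ N → ∀ m, m ≤ n →
      S m ≤ (A - c₁) * ((Icc 1 n).filter P).card := by
    intro n
    induction n with
    | zero =>
        intro _ m hm
        interval_cases m
        simp [hSdef]
    | succ n ih =>
        intro hn m hm
        have hn' : n ≤ N := Nat.le_of_succ_le hn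
        have hmono : (((Icc 1 n).filter P).card : ℝ) ≤ (((Icc 1 (n+1)).filter P).card : ℝ) := by
          exact_mod_cast card_le_card
            (filter_subset_filter _ (Icc_subset_Icc_right (Nat.le_succ n)))
        rcases Nat.lt_succ_iff_lt_or_eq.mp (Nat.lt_succ_of_le hm) with h | h
        · calc S m ≤ (A - c₁) * ((Icc 1 n).filter P).card := ih hn' m (Nat.lt_succ_iff.mp h)
            _ ≤ (A - c₁) * ((Icc 1 (n+1)).filter P).card := by
                exact mul_le_mul_of_nonneg_left hmono (le_of_lt hA0)
        · subst h
          have hsucc : S (n+1) = S n + b (n+1) := by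
            simp only [hSdef]
            rw [Finset.sum_Icc_succ_top (Nat.one_le_iff_ne_zero.mpr (Nat.succ_ne_zero n))]
          by_cases hp : P (n+1)
          · have hins : (Icc 1 (n+1)).filter P = insert (n+1) ((Icc 1 n).filter P) := by
              ext x
              simp only [mem_filter, mem_insert, mem_Icc]
              constructor
              · rintro ⟨⟨h1, h2⟩, hx⟩
                rcases eq_or_lt_of_le h2 with h | h
                · exact Or.inl h
                · exact Or.inr ⟨⟨h1, Nat.lt_succ_iff.mp h⟩, hx⟩
              · rintro (rfl | ⟨⟨h1, h2⟩, hx⟩)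
                · exact ⟨⟨Nat.succ_le_succ (Nat.zero_le n), le_rfl⟩, hp⟩
                · exact ⟨⟨h1, Nat.le_succ_of_le h2⟩, hx⟩
            have hnotmem : (n+1) ∉ (Icc 1 n).filter P := by
              simp [Finset.mem_filter, Nat.lt_irrefl]
            have hcard : (((Icc 1 (n+1)).filter P).card : ℝ)
                = ((Icc 1 n).filter P).card + 1 := by
              rw [hins, card_insert_of_notMem hnotmem]
              push_cast; ring
            have hbA : b (n+1) ≤ A - c₁ := by
              have := ha (n+1) (Nat.succ_le_succ (Nat.zero_le n)) hn
              simp only [hb]; linarith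
            have hSn := ih hn' n le_rfl
            rw [hsucc, hcard]
            nlinarith
          · simp only [hPdef, not_forall, Classical.not_imp, not_le] at hp
            obtain ⟨m', hm'lt, hm'⟩ := hp
            have hSm' := ih hn' m' (Nat.lt_succ_iff.mp hm'lt)
            calc S (n+1) ≤ S m' := le_of_lt hm'
              _ ≤ (A - c₁) * ((Icc 1 n).filter P).card := hSm'
              _ ≤ (A - c₁) * ((Icc 1 (n+1)).filter P).card :=
                  mul_le_mul_of_nonneg_left hmono (le_of_lt hA0)
  refine ⟨ns, filter_subset _ _, ?_, ?_⟩
  · -- cardinality bound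
    have hSN : (c₂ - c₁) * N ≤ S N := by
      have hcard : ((Icc 1 N).card : ℝ) = N := by
        rw [Nat.card_Icc]; push_cast; ring
      have : S N = (∑ j ∈ Icc 1 N, a j) - c₁ * N := by
        simp only [hSdef, hb, Finset.sum_sub_distrib, Finset.sum_const, nsmul_eq_mul, hcard]
        ring
      rw [this]; linarith
    have := key N le_rfl N le_rfl
    rw [div_mul_eq_mul_div, div_le_iff₀ hA0]
    calc (c₂ - c₁) * N ≤ S N := hSN
      _ ≤ (A - c₁) * ((Icc 1 N).filter P).card := this
      _ = (ns.card : ℝ) * (A - c₁) := by rw [hns]; ring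
  · intro ni hni n hn
    have hPni : P ni := (Finset.mem_filter.mp hni).2
    have hle : S n ≤ S ni := hPni n hn
    have hsplit : S n + ∑ j ∈ Icc (n+1) ni, b j = S ni := by
      simp only [hSdef]
      rw [show Icc 1 n = Ioc 0 n by rw [← Finset.Icc_add_one_left_eq_Ioc]; rfl,
        show Icc (n+1) ni = Ioc n ni by rw [← Finset.Icc_add_one_left_eq_Ioc],
        show Icc 1 ni = Ioc 0 ni by rw [← Finset.Icc_add_one_left_eq_Ioc]; rfl,
        Finset.sum_Ioc_consecutive _ (Nat.zero_le n) (le_of_lt hn)]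
    have hcard2 : ((Icc (n+1) ni).card : ℝ) = (ni : ℝ) - n := by
      rw [Nat.card_Icc]
      have : ni + 1 - (n + 1) = ni - n := by omega
      rw [this, Nat.cast_sub (le_of_lt hn)]
    have : ∑ j ∈ Icc (n+1) ni, a j
        = (∑ j ∈ Icc (n+1) ni, b j) + c₁ * ((ni : ℝ) - n) := by
      simp only [hb, Finset.sum_sub_distrib, Finset.sum_const, nsmul_eq_mul, hcard2]
      ring
    rw [this]
    have hnn : 0 ≤ ∑ j ∈ Icc (n+1) ni, b j := by linarith
    linarith
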